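/- Let k ≥ 1, m ≥ 1, n = k + m, and let S be a skew-symmetric n×n complex matrix. On the polynomial ring ℂ[y_{ij} : 1 ≤ i ≤ k, 1 ≤ j ≤ m], define the bilinear bracket {f, g} = Σ_{(i,j),(α,β)} π_{(i,j),(α,β)} · (∂f/∂y_{ij}) · (∂g/∂y_{αβ}), where π_{(i,j),(α,β)} = ½·(sign(α−i) − sign(β−j))·y_{iβ}·y_{αj} + ½·(S_{i,β+k} + S_{j+k,α} − S_{i,α} − S_{j+k,β+k})·y_{ij}·y_{αβ}. Then this bracket satisfies the Jacobi identity: {f, {g, h}} + {g, {h, f}} + {h, {f, g}} = 0 for all polynomials f, g, h. (In particular, {·,·}_S^{Gr} is a Poisson bracket on the open Schubert cell G_k^0(n); the case S = 0 is the standard Poisson homogeneous bracket.) -/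

import Mathlib

open MvPolynomial

/-- The bracket `{·,·}_S^{Gr}` on the polynomial ring `ℂ[y_{ij} : i ∈ [k], j ∈ [m]]`
in the coordinates of the open Schubert cell of `G_k(n)`, `n = k + m`, given as a
bivector: `{f,g} = Σ π_{(i,j),(α,β)} (∂f/∂y_{ij})(∂g/∂y_{αβ})` with
`π_{(i,j),(α,β)} = ½(sign(α−i)−sign(β−j)) y_{iβ} y_{αj}
  + ½(S_{i,β+k}+S_{j+k,α}−S_{i,α}−S_{j+k,β+k}) y_{ij} y_{αβ}`. -/
noncomputable def grBracket {k m : ℕ} (S : Matrix (Fin (k + m)) (Fin (k + m)) ℂ)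
    (f g : MvPolynomial (Fin k × Fin m) ℂ) : MvPolynomial (Fin k × Fin m) ℂ :=
  ∑ p : Fin k × Fin m, ∑ q : Fin k × Fin m,
    (C ((1 / 2 : ℂ) *
          ((Int.sign ((q.1 : ℤ) - (p.1 : ℤ)) - Int.sign ((q.2 : ℤ) - (p.2 : ℤ)) : ℤ) : ℂ))
        * X (p.1, q.2) * X (q.1, p.2)
      + C ((1 / 2 : ℂ) *
          (S (Fin.castAdd m p.1) (Fin.natAdd k q.2) + S (Fin.natAdd k p.2) (Fin.castAdd m q.1)
            - S (Fin.castAdd m p.1) (Fin.castAdd m q.1)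
            - S (Fin.natAdd k p.2) (Fin.natAdd k q.2)))
        * X (p.1, p.2) * X (q.1, q.2))
    * pderiv p f * pderiv q g

section GrBracketAux


set_option linter.unusedSectionVars false
variable {ι : Type*} [Fintype ι] [DecidableEq ι] {R : Type*} [CommRing R]

theorem pderiv_comm' (i j : ι) (f : MvPolynomial ι R) :
    pderiv i (pderiv j f) = pderiv j (pderiv i f) := by
  induction f using MvPolynomial.induction_on' with
  | add p q hp hq => simp [hp, hq]
  | monomial s a =>
      by_cases h : i = j
      · subst h; rfl
      · simp only [pderiv_monomial, Finsupp.tsub_apply, Finsupp.single_apply]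
        simp only [if_neg h, if_neg (Ne.symm h), tsub_zero]
        rw [tsub_right_comm]
        congr 1 <;> first | rfl | ring

noncomputable def pbr (P : ι → ι → MvPolynomial ι R) (f g : MvPolynomial ι R) :
    MvPolynomial ι R :=
  ∑ p, ∑ q, P p q * pderiv p f * pderiv q g

noncomputable def sA (P : ι → ι → MvPolynomial ι R) (f g h : MvPolynomial ι R) :
    MvPolynomial ι R :=
  ∑ p, ∑ q, ∑ r, ∑ s,
    P p q * pderiv p f * (pderiv q (P r s) * pderiv r g * pderiv s h)

noncomputable def sB (P : ι → ι → MvPolynomial ι R) (f g h : MvPolynomial ι R) :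
    MvPolynomial ι R :=
  ∑ p, ∑ q, ∑ r, ∑ s,
    P p q * pderiv p f * (P r s * pderiv q (pderiv r g) * pderiv s h)

noncomputable def sC (P : ι → ι → MvPolynomial ι R) (f g h : MvPolynomial ι R) :
    MvPolynomial ι R :=
  ∑ p, ∑ q, ∑ r, ∑ s,
    P p q * pderiv p f * (P r s * pderiv r g * pderiv q (pderiv s h))

theorem pbr_expand (P : ι → ι → MvPolynomial ι R) (f g h : MvPolynomial ι R) :
    pbr P f (pbr P g h) = sA P f g h + sB P f g h + sC P f g h := by
  unfold pbr sA sB sC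
  have hD : ∀ q : ι, pderiv q (∑ r, ∑ s, P r s * pderiv r g * pderiv s h)
      = ∑ r, ∑ s, (pderiv q (P r s) * pderiv r g * pderiv s h
          + P r s * pderiv q (pderiv r g) * pderiv s h
          + P r s * pderiv r g * pderiv q (pderiv s h)) := by
    intro q
    rw [map_sum]
    refine Finset.sum_congr rfl fun r _ => ?_
    rw [map_sum]
    refine Finset.sum_congr rfl fun s _ => ?_
    rw [pderiv_mul, pderiv_mul]; ring
  simp only [hD]
  rw [← Finset.sum_add_distrib, ← Finset.sum_add_distrib]
  refine Finset.sum_congr rfl fun p _ => ?_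
  rw [← Finset.sum_add_distrib, ← Finset.sum_add_distrib]
  refine Finset.sum_congr rfl fun q _ => ?_
  rw [Finset.mul_sum, ← Finset.sum_add_distrib, ← Finset.sum_add_distrib]
  refine Finset.sum_congr rfl fun r _ => ?_
  rw [Finset.mul_sum, ← Finset.sum_add_distrib, ← Finset.sum_add_distrib]
  refine Finset.sum_congr rfl fun s _ => ?_
  ring

theorem sum4_eq (F : ι → ι → ι → ι → MvPolynomial ι R) :
    (∑ p, ∑ q, ∑ r, ∑ s, F p q r s)
      = ∑ t : ι × ι × ι × ι, F t.1 t.2.1 t.2.2.1 t.2.2.2 := by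
  rw [Fintype.sum_prod_type]
  refine Finset.sum_congr rfl fun p _ => ?_
  rw [Fintype.sum_prod_type]
  refine Finset.sum_congr rfl fun q _ => ?_
  rw [Fintype.sum_prod_type]

theorem sBC (P : ι → ι → MvPolynomial ι R) (hanti : ∀ p q, P q p = - P p q)
    (f g h : MvPolynomial ι R) : sC P h f g = - sB P f g h := by
  unfold sB sC
  rw [sum4_eq, sum4_eq, ← Finset.sum_neg_distrib]
  refine (Fintype.sum_equiv
    (⟨fun t => (t.2.2.2, t.2.2.1, t.1, t.2.1),
      fun t => (t.2.2.1, t.2.2.2, t.2.1, t.1),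
      fun t => rfl, fun t => rfl⟩ : (ι × ι × ι × ι) ≃ (ι × ι × ι × ι))
    _ _ fun t => ?_).symm
  obtain ⟨p, q, r, s⟩ := t
  dsimp only [Equiv.coe_fn_mk]
  rw [hanti r s, pderiv_comm' r q]
  ring

theorem sAcyc (P : ι → ι → MvPolynomial ι R)
    (hK : ∀ a b c, (∑ q, (P a q * pderiv q (P b c) + P b q * pderiv q (P c a)
        + P c q * pderiv q (P a b))) = 0)
    (f g h : MvPolynomial ι R) : sA P f g h + sA P g h f + sA P h f g = 0 := by
  unfold sA
  rw [sum4_eq, sum4_eq, sum4_eq]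
  rw [show (∑ t : ι × ι × ι × ι,
        P t.1 t.2.1 * pderiv t.1 g
          * (pderiv t.2.1 (P t.2.2.1 t.2.2.2) * pderiv t.2.2.1 h * pderiv t.2.2.2 f))
      = ∑ t : ι × ι × ι × ι,
        P t.2.2.1 t.2.1 * pderiv t.2.2.1 g
          * (pderiv t.2.1 (P t.2.2.2 t.1) * pderiv t.2.2.2 h * pderiv t.1 f) from
    (Fintype.sum_equiv
      (⟨fun t => (t.2.2.1, t.2.1, t.2.2.2, t.1),
        fun t => (t.2.2.2, t.2.1, t.1, t.2.2.1),
        fun t => rfl, fun t => rfl⟩ : (ι × ι × ι × ι) ≃ (ι × ι × ι × ι))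
      _ _ fun t => rfl).symm]
  rw [show (∑ t : ι × ι × ι × ι,
        P t.1 t.2.1 * pderiv t.1 h
          * (pderiv t.2.1 (P t.2.2.1 t.2.2.2) * pderiv t.2.2.1 f * pderiv t.2.2.2 g))
      = ∑ t : ι × ι × ι × ι,
        P t.2.2.2 t.2.1 * pderiv t.2.2.2 h
          * (pderiv t.2.1 (P t.1 t.2.2.1) * pderiv t.1 f * pderiv t.2.2.1 g) from
    (Fintype.sum_equiv
      (⟨fun t => (t.2.2.2, t.2.1, t.1, t.2.2.1),
        fun t => (t.2.2.1, t.2.1, t.2.2.2, t.1),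
        fun t => rfl, fun t => rfl⟩ : (ι × ι × ι × ι) ≃ (ι × ι × ι × ι))
      _ _ fun t => rfl).symm]
  rw [← Finset.sum_add_distrib, ← Finset.sum_add_distrib]
  rw [← sum4_eq (fun a q b c =>
      P a q * pderiv a f * (pderiv q (P b c) * pderiv b g * pderiv c h)
      + P b q * pderiv b g * (pderiv q (P c a) * pderiv c h * pderiv a f)
      + P c q * pderiv c h * (pderiv q (P a b) * pderiv a f * pderiv b g))]
  refine Finset.sum_eq_zero fun a _ => ?_
  rw [Finset.sum_comm]
  refine Finset.sum_eq_zero fun b _ => ?_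
  rw [Finset.sum_comm]
  refine Finset.sum_eq_zero fun c _ => ?_
  calc (∑ q, (P a q * pderiv a f * (pderiv q (P b c) * pderiv b g * pderiv c h)
      + P b q * pderiv b g * (pderiv q (P c a) * pderiv c h * pderiv a f)
      + P c q * pderiv c h * (pderiv q (P a b) * pderiv a f * pderiv b g)))
      = (∑ q, (P a q * pderiv q (P b c) + P b q * pderiv q (P c a)
          + P c q * pderiv q (P a b))) * (pderiv a f * pderiv b g * pderiv c h) := by
        rw [Finset.sum_mul]
        exact Finset.sum_congr rfl fun q _ => by ring
    _ = 0 := by rw [hK]; ring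

theorem pbr_jacobi (P : ι → ι → MvPolynomial ι R)
    (hanti : ∀ p q, P q p = - P p q)
    (hK : ∀ a b c, (∑ q, (P a q * pderiv q (P b c) + P b q * pderiv q (P c a)
        + P c q * pderiv q (P a b))) = 0)
    (f g h : MvPolynomial ι R) :
    pbr P f (pbr P g h) + pbr P g (pbr P h f) + pbr P h (pbr P f g) = 0 := by
  rw [pbr_expand, pbr_expand, pbr_expand]
  have h1 := sBC P hanti f g h
  have h2 := sBC P hanti g h f
  have h3 := sBC P hanti h f g
  have h4 := sAcyc P hK f g h
  linear_combination h1 + h2 + h3 + h4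

noncomputable def Pgr {k m : ℕ} (S : Matrix (Fin (k + m)) (Fin (k + m)) ℂ) :
    (Fin k × Fin m) → (Fin k × Fin m) → MvPolynomial (Fin k × Fin m) ℂ := fun p q =>
  C ((1 / 2 : ℂ) *
        ((Int.sign ((q.1 : ℤ) - (p.1 : ℤ)) - Int.sign ((q.2 : ℤ) - (p.2 : ℤ)) : ℤ) : ℂ))
      * X (p.1, q.2) * X (q.1, p.2)
    + C ((1 / 2 : ℂ) *
        (S (Fin.castAdd m p.1) (Fin.natAdd k q.2) + S (Fin.natAdd k p.2) (Fin.castAdd m q.1)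
          - S (Fin.castAdd m p.1) (Fin.castAdd m q.1)
          - S (Fin.natAdd k p.2) (Fin.natAdd k q.2)))
      * X (p.1, p.2) * X (q.1, q.2)


theorem int_sign_ite (a : ℤ) : a.sign = if 0 < a then 1 else if a < 0 then -1 else 0 := by
  rcases a with (_ | n) | n
  · simp
  · simp [Int.sign]
  · have : Int.negSucc n < 0 := Int.negSucc_lt_zero n
    rw [if_neg (by omega), if_pos this]
    rfl

theorem sign_cycle (x y z : ℤ) :
    (y - x).sign * (z - y).sign + (z - y).sign * (x - z).sign + (x - z).sign * (y - x).sign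
      = if x = y ∧ y = z then 0 else -1 := by
  rw [int_sign_ite, int_sign_ite, int_sign_ite]
  split_ifs <;> omega

theorem sign_rev (x y : ℤ) : (x - y).sign = -((y - x).sign) := by
  rw [← neg_sub, Int.sign_neg]

theorem Pgr_K {k m : ℕ} (S : Matrix (Fin (k + m)) (Fin (k + m)) ℂ)
    (hS' : ∀ x y, S y x = - S x y) (a b c : Fin k × Fin m) :
    (∑ q, (Pgr S a q * pderiv q (Pgr S b c) + Pgr S b q * pderiv q (Pgr S c a)
      + Pgr S c q * pderiv q (Pgr S a b))) = 0 := by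
  obtain ⟨i, j⟩ := a; obtain ⟨α, β⟩ := b; obtain ⟨γ, δ⟩ := c
  simp only [Pgr, map_add, pderiv_mul, pderiv_C, pderiv_X, Pi.single_apply, zero_mul, add_zero,
    zero_add, mul_one, mul_add, add_mul, mul_ite, ite_mul, mul_zero,
    Finset.sum_add_distrib, Finset.sum_ite_eq, Finset.mem_univ, if_true]
  -- canonicalize sign atoms
  simp only [sign_rev (i : ℤ) (α : ℤ), sign_rev (α : ℤ) (γ : ℤ), sign_rev (γ : ℤ) (i : ℤ),
    sign_rev (j : ℤ) (β : ℤ), sign_rev (β : ℤ) (δ : ℤ), sign_rev (δ : ℤ) (j : ℤ)]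
  -- canonicalize S atoms
  simp only [hS' (Fin.castAdd m i) (Fin.natAdd k j), hS' (Fin.castAdd m i) (Fin.natAdd k β),
    hS' (Fin.castAdd m i) (Fin.natAdd k δ), hS' (Fin.castAdd m α) (Fin.natAdd k j),
    hS' (Fin.castAdd m α) (Fin.natAdd k β), hS' (Fin.castAdd m α) (Fin.natAdd k δ),
    hS' (Fin.castAdd m γ) (Fin.natAdd k j), hS' (Fin.castAdd m γ) (Fin.natAdd k β),
    hS' (Fin.castAdd m γ) (Fin.natAdd k δ),
    hS' (Fin.castAdd m i) (Fin.castAdd m α), hS' (Fin.castAdd m α) (Fin.castAdd m γ),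
    hS' (Fin.castAdd m γ) (Fin.castAdd m i),
    hS' (Fin.natAdd k j) (Fin.natAdd k β), hS' (Fin.natAdd k β) (Fin.natAdd k δ),
    hS' (Fin.natAdd k δ) (Fin.natAdd k j)]
  push_cast
  simp only [map_mul, map_add, map_sub, map_neg, map_one]
  by_cases hrow : i = α ∧ α = γ
  · obtain ⟨h1, h2⟩ := hrow; subst h1; subst h2; ring
  · by_cases hcol : j = β ∧ β = δ
    · obtain ⟨h1, h2⟩ := hcol; subst h1; subst h2; ring
    · have hrow' : ¬(((i : ℤ)) = ((α : ℤ)) ∧ ((α : ℤ)) = ((γ : ℤ))) := by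
        rintro ⟨h1, h2⟩
        exact hrow ⟨Fin.ext (by exact_mod_cast h1), Fin.ext (by exact_mod_cast h2)⟩
      have hcol' : ¬(((j : ℤ)) = ((β : ℤ)) ∧ ((β : ℤ)) = ((δ : ℤ))) := by
        rintro ⟨h1, h2⟩
        exact hcol ⟨Fin.ext (by exact_mod_cast h1), Fin.ext (by exact_mod_cast h2)⟩
      have hU : (C ((((α : ℤ) - (i : ℤ)).sign : ℂ)) : MvPolynomial (Fin k × Fin m) ℂ)
            * C ((((γ : ℤ) - (α : ℤ)).sign : ℂ))
          + C ((((γ : ℤ) - (α : ℤ)).sign : ℂ)) * C ((((i : ℤ) - (γ : ℤ)).sign : ℂ))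
          + C ((((i : ℤ) - (γ : ℤ)).sign : ℂ)) * C ((((α : ℤ) - (i : ℤ)).sign : ℂ))
          = C ((-1 : ℂ)) := by
        rw [← map_mul, ← map_mul, ← map_mul, ← map_add, ← map_add]
        congr 1
        have h := sign_cycle (i : ℤ) (α : ℤ) (γ : ℤ)
        rw [if_neg hrow'] at h
        exact_mod_cast h
      have hV : (C ((((β : ℤ) - (j : ℤ)).sign : ℂ)) : MvPolynomial (Fin k × Fin m) ℂ)
            * C ((((δ : ℤ) - (β : ℤ)).sign : ℂ))
          + C ((((δ : ℤ) - (β : ℤ)).sign : ℂ)) * C ((((j : ℤ) - (δ : ℤ)).sign : ℂ))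
          + C ((((j : ℤ) - (δ : ℤ)).sign : ℂ)) * C ((((β : ℤ) - (j : ℤ)).sign : ℂ))
          = C ((-1 : ℂ)) := by
        rw [← map_mul, ← map_mul, ← map_mul, ← map_add, ← map_add]
        congr 1
        have h := sign_cycle (j : ℤ) (β : ℤ) (δ : ℤ)
        rw [if_neg hcol'] at h
        exact_mod_cast h
      linear_combination
        (C (1/2 : ℂ) * C (1/2 : ℂ)
          * (X (i, δ) * X (α, j) * X (γ, β) - X (i, β) * X (γ, j) * X (α, δ))) * hU
        - (C (1/2 : ℂ) * C (1/2 : ℂ)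
          * (X (i, δ) * X (α, j) * X (γ, β) - X (i, β) * X (γ, j) * X (α, δ))) * hV

theorem Pgr_anti {k m : ℕ} (S : Matrix (Fin (k + m)) (Fin (k + m)) ℂ)
    (hS' : ∀ x y, S y x = - S x y) (p q : Fin k × Fin m) :
    Pgr S q p = - Pgr S p q := by
  obtain ⟨i, j⟩ := p; obtain ⟨α, β⟩ := q
  unfold Pgr
  dsimp only
  rw [show ((i : ℤ) - (α : ℤ)).sign = -(((α : ℤ) - (i : ℤ)).sign) by
        rw [← neg_sub, Int.sign_neg],
      show ((j : ℤ) - (β : ℤ)).sign = -(((β : ℤ) - (j : ℤ)).sign) by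
        rw [← neg_sub, Int.sign_neg],
      hS' (Fin.natAdd k j) (Fin.castAdd m α),
      hS' (Fin.castAdd m i) (Fin.natAdd k β),
      hS' (Fin.castAdd m i) (Fin.castAdd m α),
      hS' (Fin.natAdd k j) (Fin.natAdd k β)]
  push_cast
  simp only [map_mul, map_add, map_sub, map_neg, map_one]
  ring

end GrBracketAux

/-- The bracket `{·,·}_S^{Gr}` on the open Schubert cell satisfies the Jacobi
identity, i.e. it is a Poisson bracket. -/
theorem grBracket_jacobi (k m : ℕ) (hk : 1 ≤ k) (hm : 1 ≤ m)
    (S : Matrix (Fin (k + m)) (Fin (k + m)) ℂ) (hS : Matrix.transpose S = -S)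
    (f g h : MvPolynomial (Fin k × Fin m) ℂ) :
    grBracket S f (grBracket S g h)
      + grBracket S g (grBracket S h f)
      + grBracket S h (grBracket S f g) = 0 := by
  have hS' : ∀ x y, S y x = - S x y := fun x y => by
    have h0 := congrFun (congrFun hS x) y
    simpa [Matrix.transpose_apply, Matrix.neg_apply] using h0
  exact pbr_jacobi (Pgr S) (fun p q => Pgr_anti S hS' p q) (Pgr_K S hS') f g h
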